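/- Assume (r1,r2,r3,r4,i,j,N) is admissible and i + j ≥ r1 + r3 and i + j ≥ r2 + r4 (so m_min = 0). Then F_2^N(r1,r2,i; r3,r4,j) = (−1)^ρ · K_2 · Σ_{n=0}^{m_max} qⁿ · (q^{a1};q)_n (q^{a2};q)_n (q^{a3};q)_n (q^{a4};q)_n / ( (q;q)_n · (q^{b1};q)_n (q^{b2};q)_n (q^{b3};q)_n ), where a1 = (i − r1 − r2)/2 − (N−2), a2 = (i − r3 − r4)/2, a3 = (j − r1 − r4)/2, a4 = (j − r2 − r3)/2, b1 = −ρ − (N−1), b2 = (i + j − r2 − r4)/2 + 1, b3 = (i + j − r1 − r3)/2 + 1 (all integers, and a1 + a2 + a3 + a4 + 1 = b1 + b2 + b3). All Pochhammer factors in the denominators are nonzero for 0 ≤ n ≤ m_max. This is the terminating balanced ₄Φ₃ representation of the type II multiplicity-free 6-j symbol (Statement 3 of the paper, made precise up to the overall sign (−1)^ρ which the paper leaves implicit). -/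

import Mathlib

open Finset

/-- The quantum integer `[n] = (tⁿ − t⁻ⁿ)/(t − t⁻¹)`. -/
noncomputable def qint (t : ℝ) (n : ℤ) : ℝ := (t ^ n - t ^ (-n)) / (t - t⁻¹)

/-- The quantum factorial `[n]! = [1][2]⋯[n]`, with `[0]! = 1`
(and value `1` for negative arguments, which never occur below). -/
noncomputable def qfact (t : ℝ) (n : ℤ) : ℝ :=
  ∏ k ∈ Finset.range n.toNat, qint t ((k : ℤ) + 1)

/-- The q-Pochhammer symbol `(x; q)_n = ∏_{s=0}^{n−1} (1 − x qˢ)`. -/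
noncomputable def qpoch (x q : ℝ) (n : ℕ) : ℝ :=
  ∏ s ∈ Finset.range n, (1 - x * q ^ s)

/-- Admissibility of the tuple `(r₁,r₂,r₃,r₄,i,j,N)`. -/
def Admissible (r₁ r₂ r₃ r₄ i j N : ℤ) : Prop :=
  0 ≤ r₁ ∧ 0 ≤ r₂ ∧ 0 ≤ r₃ ∧ 0 ≤ r₄ ∧ 0 ≤ i ∧ 0 ≤ j ∧ 2 ≤ N ∧
  2 ∣ (r₁ + r₂ + i) ∧ 2 ∣ (r₃ + r₄ + i) ∧ 2 ∣ (r₁ + r₄ + j) ∧ 2 ∣ (r₂ + r₃ + j) ∧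
  max |r₁ - r₂| |r₃ - r₄| ≤ i ∧ i ≤ min (r₁ + r₂) (r₃ + r₄) ∧
  max |r₂ - r₃| |r₁ - r₄| ≤ j ∧ j ≤ min (r₂ + r₃) (r₁ + r₄)

/-- `ρ = (r₁+r₂+r₃+r₄)/2`. -/
def rho (r₁ r₂ r₃ r₄ : ℤ) : ℤ := (r₁ + r₂ + r₃ + r₄) / 2

/-- `m_max = (1/2)·min(r₁+r₂−i, r₃+r₄−i, r₁+r₄−j, r₂+r₃−j)`. -/
def mMax (r₁ r₂ r₃ r₄ i j : ℤ) : ℤ :=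
  (min (min (r₁ + r₂ - i) (r₃ + r₄ - i)) (min (r₁ + r₄ - j) (r₂ + r₃ - j))) / 2

/-- `m_min = (1/2)·max(0, r₁+r₃−i−j, r₂+r₄−i−j)`. -/
def mMin (r₁ r₂ r₃ r₄ i j : ℤ) : ℤ :=
  (max 0 (max (r₁ + r₃ - i - j) (r₂ + r₄ - i - j))) / 2

/-- `θ_N(a,b,c)`. -/
noncomputable def theta (t : ℝ) (N a b c : ℤ) : ℝ :=
  Real.sqrt (qfact t ((a + b - c) / 2) * qfact t ((a - b + c) / 2) *
    qfact t ((-a + b + c) / 2) / qfact t ((a + b + c) / 2 + N - 1))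

/-- `K′ = θ_N(r₁,r₂,i)·θ_N(r₃,r₄,i)·θ_N(r₁,r₄,j)·θ_N(r₂,r₃,j)·[N−1]!·[N−2]!`. -/
noncomputable def Kprime (t : ℝ) (N r₁ r₂ r₃ r₄ i j : ℤ) : ℝ :=
  theta t N r₁ r₂ i * theta t N r₃ r₄ i * theta t N r₁ r₄ j * theta t N r₂ r₃ j *
    qfact t (N - 1) * qfact t (N - 2)

/-- The multiplicity-free 6-j expression `F_T^N(r₁,r₂,i; r₃,r₄,j)` of type `T ∈ {1,2}`. -/
noncomputable def F (t : ℝ) (T : ℕ) (N r₁ r₂ i r₃ r₄ j : ℤ) : ℝ :=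
  Kprime t N r₁ r₂ r₃ r₄ i j *
    ∑ m ∈ Finset.Icc (mMin r₁ r₂ r₃ r₄ i j) (mMax r₁ r₂ r₃ r₄ i j),
      (-1 : ℝ) ^ (rho r₁ r₂ r₃ r₄ - m) * qfact t (rho r₁ r₂ r₃ r₄ + N - 1 - m) /
        (qfact t m * qfact t ((r₃ + r₄ - i) / 2 - m) * qfact t ((r₂ + r₃ - j) / 2 - m) *
          qfact t ((r₁ + r₄ - j) / 2 - m) * qfact t ((i + j - r₂ - r₄) / 2 + m) *
          qfact t ((r₁ + r₂ - i) / 2 + (N - 2) * (if T = 2 then 1 else 0) - m) *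
          qfact t ((i + j - r₁ - r₃) / 2 + (N - 2) * (if T = 1 then 1 else 0) + m))

/-- The prefactor `K_T` (for the case `m_min = 0`). -/
noncomputable def Kfac (t : ℝ) (T : ℕ) (N r₁ r₂ i r₃ r₄ j : ℤ) : ℝ :=
  Kprime t N r₁ r₂ r₃ r₄ i j * qfact t (rho r₁ r₂ r₃ r₄ + N - 1) /
    (qfact t ((r₃ + r₄ - i) / 2) *
      qfact t ((r₁ + r₂ - i) / 2 + (N - 2) * (if T = 2 then 1 else 0)) *
      qfact t ((r₂ + r₃ - j) / 2) * qfact t ((r₁ + r₄ - j) / 2) *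
      qfact t ((i + j - r₂ - r₄) / 2) *
      qfact t ((i + j - r₁ - r₃) / 2 + (N - 2) * (if T = 1 then 1 else 0)))

section AuxLemmas

variable {t : ℝ}

lemma qfact_zero (t : ℝ) : qfact t 0 = 1 := by simp [qfact]

lemma qint_neg (t : ℝ) (n : ℤ) : qint t (-n) = - qint t n := by
  unfold qint; rw [neg_neg]; ring

lemma tsub_ne (ht : 0 < t) (ht1 : t ≠ 1) : t - t⁻¹ ≠ 0 := by
  intro h
  rw [sub_eq_zero] at h
  have h2 : t * t = 1 := by nth_rewrite 1 [h]; exact inv_mul_cancel₀ ht.ne'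
  rcases mul_self_eq_one_iff.mp h2 with h3 | h3
  · exact ht1 h3
  · linarith

lemma qint_pos (ht : 0 < t) (ht1 : t ≠ 1) {n : ℤ} (hn : 0 < n) : 0 < qint t n := by
  have ht0 : t ≠ 0 := ht.ne'
  unfold qint
  rcases lt_or_gt_of_ne ht1 with hlt | hgt
  · have h1 : t ^ n < t ^ (-n) := zpow_lt_zpow_right_of_lt_one₀ ht hlt (by omega)
    have h2 : t < t⁻¹ := by nlinarith [mul_inv_cancel₀ ht0, mul_pos ht ht]
    have := div_pos_of_neg_of_neg (show t ^ n - t ^ (-n) < 0 by linarith)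
      (show t - t⁻¹ < 0 by linarith)
    exact this
  · have h1 : t ^ (-n) < t ^ n := zpow_lt_zpow_right₀ hgt (by omega)
    have h2 : t⁻¹ < t := by nlinarith [mul_inv_cancel₀ ht0, mul_pos ht ht]
    exact div_pos (by linarith) (by linarith)

lemma qint_ne (ht : 0 < t) (ht1 : t ≠ 1) {n : ℤ} (hn : n ≠ 0) : qint t n ≠ 0 := by
  rcases lt_or_gt_of_ne hn with h | h
  · have hp := qint_pos ht ht1 (show 0 < -n by omega)
    rw [qint_neg] at hp
    intro h0
    rw [h0] at hp
    simp at hp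
  · exact (qint_pos ht ht1 h).ne'

lemma qfact_pos (ht : 0 < t) (ht1 : t ≠ 1) (n : ℤ) : 0 < qfact t n :=
  Finset.prod_pos fun k _ => qint_pos ht ht1 (by positivity)

lemma qfact_succ' {a b : ℤ} (h0 : 0 ≤ b) (h : a = b + 1) :
    qfact t a = qfact t b * qint t a := by
  subst h
  unfold qfact
  rw [show (b + 1).toNat = b.toNat + 1 by omega, Finset.prod_range_succ,
    show ((b.toNat : ℤ) + 1) = b + 1 by omega]

lemma qfact_pred (ht : 0 < t) (ht1 : t ≠ 1) {a b : ℤ} (h0 : 0 ≤ b) (h : a = b + 1) :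
    qfact t b = qfact t a / qint t a := by
  rw [qfact_succ' h0 h, mul_div_cancel_right₀]
  exact qint_ne ht ht1 (by omega)

lemma qpoch_succ (x q : ℝ) (n : ℕ) :
    qpoch x q (n + 1) = qpoch x q n * (1 - x * q ^ n) := Finset.prod_range_succ _ _

lemma key (ht : 0 < t) (ht1 : t ≠ 1) (x : ℤ) :
    1 - (t ^ 2) ^ x = t ^ x * (t - t⁻¹) * qint t (-x) := by
  have ht0 : t ≠ 0 := ht.ne'
  have hu : t - t⁻¹ ≠ 0 := tsub_ne ht ht1
  have h1 : ((t : ℝ) ^ 2) ^ x = t ^ x * t ^ x := by rw [sq, mul_zpow]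
  have h2 : (t : ℝ) ^ x * t ^ (-x) = 1 := by
    rw [← zpow_add₀ ht0, show x + -x = 0 by ring, zpow_zero]
  unfold qint
  rw [neg_neg, h1, mul_assoc, mul_comm (t - t⁻¹), div_mul_cancel₀ _ hu, mul_sub, h2]

lemma key' (ht : 0 < t) (ht1 : t ≠ 1) (a : ℤ) (n : ℕ) :
    (1 : ℝ) - (t ^ 2) ^ a * (t ^ 2) ^ n = t ^ a * t ^ n * (t - t⁻¹) * qint t (-a - n) := by
  have h : ((t : ℝ) ^ 2) ^ (n : ℕ) = ((t : ℝ) ^ 2) ^ ((n : ℕ) : ℤ) := (zpow_natCast _ n).symm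
  rw [h, ← zpow_add₀ (pow_ne_zero 2 ht.ne') a n, key ht ht1 (a + n),
    zpow_add₀ ht.ne' a n, zpow_natCast, show -(a + (n : ℤ)) = -a - n by ring]

lemma qpoch_ne (ht : 0 < t) (ht1 : t ≠ 1) (a : ℤ) (n : ℕ)
    (h : ∀ s : ℕ, s < n → a + (s : ℤ) ≠ 0) :
    qpoch ((t ^ 2) ^ a) (t ^ 2) n ≠ 0 := by
  unfold qpoch
  rw [Finset.prod_ne_zero_iff]
  intro s hs
  rw [key' ht ht1 a s]
  exact mul_ne_zero (mul_ne_zero (mul_ne_zero (zpow_ne_zero _ ht.ne') (pow_ne_zero _ ht.ne'))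
    (tsub_ne ht ht1)) (qint_ne ht ht1 (by have := h s (Finset.mem_range.mp hs); omega))

end AuxLemmas

set_option maxHeartbeats 1600000 in
lemma step2L (ht : 0 < t) (ht1 : t ≠ 1) (A₁ A₂ A₃ A₄ E₁ E₂ P : ℤ)
    (hE₁ : 0 ≤ E₁) (hE₂ : 0 ≤ E₂)
    (hbal : P = A₁ + A₂ + A₃ + A₄ + E₁ + E₂ + 1) (n : ℕ) (hn1 : (n : ℤ) < P) :
    (qint t (A₁ - (n : ℤ)) * qint t (A₂ - (n : ℤ)) * qint t (A₃ - (n : ℤ)) *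
        qint t (A₄ - (n : ℤ))) /
      (qint t ((n : ℤ) + 1) * qint t (P - (n : ℤ)) * qint t (E₁ + ((n : ℤ) + 1)) *
        qint t (E₂ + ((n : ℤ) + 1)))
    = -(t ^ 2 * ((1 - (t ^ 2) ^ (-A₁) * (t ^ 2) ^ n) * (1 - (t ^ 2) ^ (-A₂) * (t ^ 2) ^ n) *
          (1 - (t ^ 2) ^ (-A₃) * (t ^ 2) ^ n) * (1 - (t ^ 2) ^ (-A₄) * (t ^ 2) ^ n)) /
        ((1 - (t ^ 2) ^ (1 : ℤ) * (t ^ 2) ^ n) * (1 - (t ^ 2) ^ (-P) * (t ^ 2) ^ n) *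
          (1 - (t ^ 2) ^ (E₁ + 1) * (t ^ 2) ^ n) * (1 - (t ^ 2) ^ (E₂ + 1) * (t ^ 2) ^ n))) := by
  have ht0 : t ≠ 0 := ht.ne'
  have hu : t - t⁻¹ ≠ 0 := tsub_ne ht ht1
  subst hbal
  rw [key' ht ht1 (-A₁) n, key' ht ht1 (-A₂) n, key' ht ht1 (-A₃) n, key' ht ht1 (-A₄) n,
    key' ht ht1 1 n, key' ht ht1 (-(A₁ + A₂ + A₃ + A₄ + E₁ + E₂ + 1)) n,
    key' ht ht1 (E₁ + 1) n, key' ht ht1 (E₂ + 1) n]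
  simp only [neg_neg]
  rw [show (-(1 : ℤ) - (n : ℤ)) = -((n : ℤ) + 1) by ring,
    show (-(E₁ + 1) - (n : ℤ)) = -(E₁ + ((n : ℤ) + 1)) by ring,
    show (-(E₂ + 1) - (n : ℤ)) = -(E₂ + ((n : ℤ) + 1)) by ring]
  simp only [qint_neg]
  rw [show (t : ℝ) ^ (-A₁ : ℤ) = (t ^ A₁)⁻¹ from zpow_neg t A₁,
    show (t : ℝ) ^ (-A₂ : ℤ) = (t ^ A₂)⁻¹ from zpow_neg t A₂,
    show (t : ℝ) ^ (-A₃ : ℤ) = (t ^ A₃)⁻¹ from zpow_neg t A₃,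
    show (t : ℝ) ^ (-A₄ : ℤ) = (t ^ A₄)⁻¹ from zpow_neg t A₄,
    zpow_one t,
    show (t : ℝ) ^ (-(A₁ + A₂ + A₃ + A₄ + E₁ + E₂ + 1) : ℤ)
        = (t ^ A₁ * t ^ A₂ * t ^ A₃ * t ^ A₄ * t ^ E₁ * t ^ E₂ * t)⁻¹ by
      rw [zpow_neg]
      congr 1
      rw [zpow_add₀ ht0, zpow_add₀ ht0, zpow_add₀ ht0, zpow_add₀ ht0, zpow_add₀ ht0,
        zpow_add₀ ht0, zpow_one],
    show (t : ℝ) ^ (E₁ + 1 : ℤ) = t ^ E₁ * t by rw [zpow_add₀ ht0, zpow_one],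
    show (t : ℝ) ^ (E₂ + 1 : ℤ) = t ^ E₂ * t by rw [zpow_add₀ ht0, zpow_one]]
  have hq1 : qint t ((n : ℤ) + 1) ≠ 0 := qint_ne ht ht1 (by omega)
  have hq2 : qint t (A₁ + A₂ + A₃ + A₄ + E₁ + E₂ + 1 - (n : ℤ)) ≠ 0 := qint_ne ht ht1 (by omega)
  have hq3 : qint t (E₁ + ((n : ℤ) + 1)) ≠ 0 := qint_ne ht ht1 (by omega)
  have hq4 : qint t (E₂ + ((n : ℤ) + 1)) ≠ 0 := qint_ne ht ht1 (by omega)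
  have hz1 : (t : ℝ) ^ A₁ ≠ 0 := zpow_ne_zero _ ht0
  have hz2 : (t : ℝ) ^ A₂ ≠ 0 := zpow_ne_zero _ ht0
  have hz3 : (t : ℝ) ^ A₃ ≠ 0 := zpow_ne_zero _ ht0
  have hz4 : (t : ℝ) ^ A₄ ≠ 0 := zpow_ne_zero _ ht0
  have hz5 : (t : ℝ) ^ E₁ ≠ 0 := zpow_ne_zero _ ht0
  have hz6 : (t : ℝ) ^ E₂ ≠ 0 := zpow_ne_zero _ ht0
  have hw : (t : ℝ) ^ (n : ℕ) ≠ 0 := pow_ne_zero _ ht0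
  set u := t - t⁻¹ with hu'
  set w := (t : ℝ) ^ (n : ℕ) with hw'
  set x1 := qint t (A₁ - (n : ℤ)) with hx1
  set x2 := qint t (A₂ - (n : ℤ)) with hx2
  set x3 := qint t (A₃ - (n : ℤ)) with hx3
  set x4 := qint t (A₄ - (n : ℤ)) with hx4
  set y1 := qint t ((n : ℤ) + 1) with hy1
  set y2 := qint t (A₁ + A₂ + A₃ + A₄ + E₁ + E₂ + 1 - (n : ℤ)) with hy2
  set y3 := qint t (E₁ + ((n : ℤ) + 1)) with hy3
  set y4 := qint t (E₂ + ((n : ℤ) + 1)) with hy4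
  set z1 := (t : ℝ) ^ A₁ with hz1'
  set z2 := (t : ℝ) ^ A₂ with hz2'
  set z3 := (t : ℝ) ^ A₃ with hz3'
  set z4 := (t : ℝ) ^ A₄ with hz4'
  set z5 := (t : ℝ) ^ E₁ with hz5'
  set z6 := (t : ℝ) ^ E₂ with hz6'
  field_simp

set_option maxHeartbeats 1600000 in
lemma masterA (t : ℝ) (ht : 0 < t) (ht1 : t ≠ 1) (A₁ A₂ A₃ A₄ E₁ E₂ P : ℤ)
    (hE₁ : 0 ≤ E₁) (hE₂ : 0 ≤ E₂) (hbal : P = A₁ + A₂ + A₃ + A₄ + E₁ + E₂ + 1) :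
    ∀ n : ℕ, (n : ℤ) ≤ A₁ → (n : ℤ) ≤ A₂ → (n : ℤ) ≤ A₃ → (n : ℤ) ≤ A₄ →
    qfact t (P - n) /
      (qfact t n * qfact t (A₂ - n) * qfact t (A₄ - n) * qfact t (A₃ - n) *
        qfact t (E₁ + n) * qfact t (A₁ - n) * qfact t (E₂ + n)) =
    (-1 : ℝ) ^ n *
      (qfact t P /
        (qfact t A₂ * qfact t A₁ * qfact t A₄ * qfact t A₃ * qfact t E₁ * qfact t E₂) *
      ((t ^ 2) ^ n *
        (qpoch ((t ^ 2) ^ (-A₁)) (t ^ 2) n * qpoch ((t ^ 2) ^ (-A₂)) (t ^ 2) n *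
          qpoch ((t ^ 2) ^ (-A₃)) (t ^ 2) n * qpoch ((t ^ 2) ^ (-A₄)) (t ^ 2) n) /
        (qpoch ((t ^ 2) ^ (1 : ℤ)) (t ^ 2) n * qpoch ((t ^ 2) ^ (-P)) (t ^ 2) n *
          qpoch ((t ^ 2) ^ (E₁ + 1)) (t ^ 2) n * qpoch ((t ^ 2) ^ (E₂ + 1)) (t ^ 2) n))) := by
  have ht0 : t ≠ 0 := ht.ne'
  have hu : t - t⁻¹ ≠ 0 := tsub_ne ht ht1
  have hfne : ∀ m : ℤ, qfact t m ≠ 0 := fun m => (qfact_pos ht ht1 m).ne'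
  intro n
  induction n with
  | zero =>
      intro _ _ _ _
      simp only [Nat.cast_zero, sub_zero, add_zero, qfact_zero, pow_zero, one_mul, mul_one,
        qpoch, Finset.range_zero, Finset.prod_empty, one_div_one]
      rw [div_eq_div_iff
        (mul_ne_zero (mul_ne_zero (mul_ne_zero (mul_ne_zero (mul_ne_zero (hfne _) (hfne _))
          (hfne _)) (hfne _)) (hfne _)) (hfne _))
        (mul_ne_zero (mul_ne_zero (mul_ne_zero (mul_ne_zero (mul_ne_zero (hfne _) (hfne _))
          (hfne _)) (hfne _)) (hfne _)) (hfne _))]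
      ring
  | succ n ih =>
      intro h1 h2 h3 h4
      push_cast at h1 h2 h3 h4 ⊢
      have b1 : (n : ℤ) ≤ A₁ := by omega
      have b2 : (n : ℤ) ≤ A₂ := by omega
      have b3 : (n : ℤ) ≤ A₃ := by omega
      have b4 : (n : ℤ) ≤ A₄ := by omega
      have ihn := ih b1 b2 b3 b4
      have hqne : ∀ m : ℤ, 0 < m → qint t m ≠ 0 := fun m hm => qint_ne ht ht1 (by omega)
      have hs2 := step2L ht ht1 A₁ A₂ A₃ A₄ E₁ E₂ P hE₁ hE₂ hbal n (by omega)
      have step1 : qfact t (P - ((n : ℤ) + 1)) /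
          (qfact t ((n : ℤ) + 1) * qfact t (A₂ - ((n : ℤ) + 1)) * qfact t (A₄ - ((n : ℤ) + 1)) *
            qfact t (A₃ - ((n : ℤ) + 1)) * qfact t (E₁ + ((n : ℤ) + 1)) *
            qfact t (A₁ - ((n : ℤ) + 1)) * qfact t (E₂ + ((n : ℤ) + 1))) =
          (qfact t (P - (n : ℤ)) /
            (qfact t (n : ℤ) * qfact t (A₂ - (n : ℤ)) * qfact t (A₄ - (n : ℤ)) *
              qfact t (A₃ - (n : ℤ)) * qfact t (E₁ + (n : ℤ)) * qfact t (A₁ - (n : ℤ)) *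
              qfact t (E₂ + (n : ℤ)))) *
          ((qint t (A₁ - (n : ℤ)) * qint t (A₂ - (n : ℤ)) * qint t (A₃ - (n : ℤ)) *
              qint t (A₄ - (n : ℤ))) /
            (qint t ((n : ℤ) + 1) * qint t (P - (n : ℤ)) * qint t (E₁ + ((n : ℤ) + 1)) *
              qint t (E₂ + ((n : ℤ) + 1)))) := by
        rw [qfact_pred ht ht1 (b := P - ((n : ℤ) + 1)) (a := P - (n : ℤ)) (by omega) (by ring),
          qfact_succ' (a := (n : ℤ) + 1) (b := (n : ℤ)) (by omega) rfl,
          qfact_succ' (a := E₁ + ((n : ℤ) + 1)) (b := E₁ + (n : ℤ)) (by omega) (by ring),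
          qfact_succ' (a := E₂ + ((n : ℤ) + 1)) (b := E₂ + (n : ℤ)) (by omega) (by ring),
          qfact_succ' (a := A₂ - (n : ℤ)) (b := A₂ - ((n : ℤ) + 1)) (by omega) (by ring),
          qfact_succ' (a := A₄ - (n : ℤ)) (b := A₄ - ((n : ℤ) + 1)) (by omega) (by ring),
          qfact_succ' (a := A₃ - (n : ℤ)) (b := A₃ - ((n : ℤ) + 1)) (by omega) (by ring),
          qfact_succ' (a := A₁ - (n : ℤ)) (b := A₁ - ((n : ℤ) + 1)) (by omega) (by ring),
          qfact_succ' (a := P - (n : ℤ)) (b := P - ((n : ℤ) + 1)) (by omega) (by ring)]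
        set F1 := qfact t (P - ((n : ℤ) + 1))
        set F2 := qfact t (n : ℤ)
        set F3 := qfact t (A₂ - ((n : ℤ) + 1))
        set F4 := qfact t (A₄ - ((n : ℤ) + 1))
        set F5 := qfact t (A₃ - ((n : ℤ) + 1))
        set F6 := qfact t (A₁ - ((n : ℤ) + 1))
        set F7 := qfact t (E₁ + (n : ℤ))
        set F8 := qfact t (E₂ + (n : ℤ))
        set Q1 := qint t ((n : ℤ) + 1)
        set Q2 := qint t (P - (n : ℤ))
        set Q3 := qint t (E₁ + ((n : ℤ) + 1))
        set Q4 := qint t (E₂ + ((n : ℤ) + 1))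
        set Q5 := qint t (A₁ - (n : ℤ))
        set Q6 := qint t (A₂ - (n : ℤ))
        set Q7 := qint t (A₃ - (n : ℤ))
        set Q8 := qint t (A₄ - (n : ℤ))
        have n1 : F1 ≠ 0 := hfne _
        have n2 : F2 ≠ 0 := hfne _
        have n3 : F3 ≠ 0 := hfne _
        have n4 : F4 ≠ 0 := hfne _
        have n5 : F5 ≠ 0 := hfne _
        have n6 : F6 ≠ 0 := hfne _
        have n7 : F7 ≠ 0 := hfne _
        have n8 : F8 ≠ 0 := hfne _
        have m1 : Q1 ≠ 0 := hqne _ (by omega)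
        have m2 : Q2 ≠ 0 := hqne _ (by omega)
        have m3 : Q3 ≠ 0 := hqne _ (by omega)
        have m4 : Q4 ≠ 0 := hqne _ (by omega)
        have m5 : Q5 ≠ 0 := hqne _ (by omega)
        have m6 : Q6 ≠ 0 := hqne _ (by omega)
        have m7 : Q7 ≠ 0 := hqne _ (by omega)
        have m8 : Q8 ≠ 0 := hqne _ (by omega)
        field_simp
      rw [step1, ihn, hs2]
      rw [pow_succ (-1 : ℝ) n, pow_succ ((t : ℝ) ^ 2) n]
      simp only [qpoch_succ]
      have hd1 : (1 : ℝ) - (t ^ 2) ^ (1 : ℤ) * (t ^ 2) ^ n ≠ 0 := by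
        rw [key' ht ht1 1 n]
        exact mul_ne_zero (mul_ne_zero (mul_ne_zero (zpow_ne_zero _ ht0) (pow_ne_zero _ ht0)) hu)
          (qint_ne ht ht1 (by omega))
      have hd2 : (1 : ℝ) - (t ^ 2) ^ (-P) * (t ^ 2) ^ n ≠ 0 := by
        rw [key' ht ht1 (-P) n]
        exact mul_ne_zero (mul_ne_zero (mul_ne_zero (zpow_ne_zero _ ht0) (pow_ne_zero _ ht0)) hu)
          (qint_ne ht ht1 (by omega))
      have hd3 : (1 : ℝ) - (t ^ 2) ^ (E₁ + 1) * (t ^ 2) ^ n ≠ 0 := by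
        rw [key' ht ht1 (E₁ + 1) n]
        exact mul_ne_zero (mul_ne_zero (mul_ne_zero (zpow_ne_zero _ ht0) (pow_ne_zero _ ht0)) hu)
          (qint_ne ht ht1 (by omega))
      have hd4 : (1 : ℝ) - (t ^ 2) ^ (E₂ + 1) * (t ^ 2) ^ n ≠ 0 := by
        rw [key' ht ht1 (E₂ + 1) n]
        exact mul_ne_zero (mul_ne_zero (mul_ne_zero (zpow_ne_zero _ ht0) (pow_ne_zero _ ht0)) hu)
          (qint_ne ht ht1 (by omega))
      have hp1 : qpoch ((t ^ 2) ^ (1 : ℤ)) (t ^ 2) n ≠ 0 :=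
        qpoch_ne ht ht1 1 n (by intro s _; omega)
      have hp2 : qpoch ((t ^ 2) ^ (-P)) (t ^ 2) n ≠ 0 :=
        qpoch_ne ht ht1 _ n (by intro s hs; omega)
      have hp3 : qpoch ((t ^ 2) ^ (E₁ + 1)) (t ^ 2) n ≠ 0 :=
        qpoch_ne ht ht1 _ n (by intro s _; omega)
      have hp4 : qpoch ((t ^ 2) ^ (E₂ + 1)) (t ^ 2) n ≠ 0 :=
        qpoch_ne ht ht1 _ n (by intro s _; omega)
      set g1 := qpoch ((t ^ 2) ^ (-A₁)) (t ^ 2) n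
      set g2 := qpoch ((t ^ 2) ^ (-A₂)) (t ^ 2) n
      set g3 := qpoch ((t ^ 2) ^ (-A₃)) (t ^ 2) n
      set g4 := qpoch ((t ^ 2) ^ (-A₄)) (t ^ 2) n
      set g5 := qpoch ((t ^ 2) ^ (1 : ℤ)) (t ^ 2) n
      set g6 := qpoch ((t ^ 2) ^ (-P)) (t ^ 2) n
      set g7 := qpoch ((t ^ 2) ^ (E₁ + 1)) (t ^ 2) n
      set g8 := qpoch ((t ^ 2) ^ (E₂ + 1)) (t ^ 2) n
      set d1 := (1 : ℝ) - (t ^ 2) ^ (-A₁) * (t ^ 2) ^ n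
      set d2 := (1 : ℝ) - (t ^ 2) ^ (-A₂) * (t ^ 2) ^ n
      set d3 := (1 : ℝ) - (t ^ 2) ^ (-A₃) * (t ^ 2) ^ n
      set d4 := (1 : ℝ) - (t ^ 2) ^ (-A₄) * (t ^ 2) ^ n
      set e1 := (1 : ℝ) - (t ^ 2) ^ (1 : ℤ) * (t ^ 2) ^ n
      set e2 := (1 : ℝ) - (t ^ 2) ^ (-P) * (t ^ 2) ^ n
      set e3 := (1 : ℝ) - (t ^ 2) ^ (E₁ + 1) * (t ^ 2) ^ n
      set e4 := (1 : ℝ) - (t ^ 2) ^ (E₂ + 1) * (t ^ 2) ^ n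
      set Cv := qfact t P /
        (qfact t A₂ * qfact t A₁ * qfact t A₄ * qfact t A₃ * qfact t E₁ * qfact t E₂)
      set W := ((t : ℝ) ^ 2) ^ n
      field_simp

/-- the terminating balanced `₄Φ₃` representation of the type II
multiplicity-free 6-j symbol (with `m_min = 0`), including the balance relation on the
arguments and the nonvanishing of the denominator Pochhammer factors. -/
theorem stmt5 (t : ℝ) (ht : 0 < t) (ht1 : t ≠ 1) (r₁ r₂ r₃ r₄ i j N : ℤ)
    (hadm : Admissible r₁ r₂ r₃ r₄ i j N)
    (hij1 : r₁ + r₃ ≤ i + j) (hij2 : r₂ + r₄ ≤ i + j) :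
    (((i - r₁ - r₂) / 2 - (N - 2)) + ((i - r₃ - r₄) / 2) + ((j - r₁ - r₄) / 2) +
        ((j - r₂ - r₃) / 2) + 1 =
      (-(rho r₁ r₂ r₃ r₄) - (N - 1)) + ((i + j - r₂ - r₄) / 2 + 1) +
        ((i + j - r₁ - r₃) / 2 + 1)) ∧
    (∀ n : ℕ, (n : ℤ) ≤ mMax r₁ r₂ r₃ r₄ i j →
      qpoch (t ^ 2) (t ^ 2) n ≠ 0 ∧
      qpoch ((t ^ 2) ^ (-(rho r₁ r₂ r₃ r₄) - (N - 1))) (t ^ 2) n ≠ 0 ∧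
      qpoch ((t ^ 2) ^ ((i + j - r₂ - r₄) / 2 + 1)) (t ^ 2) n ≠ 0 ∧
      qpoch ((t ^ 2) ^ ((i + j - r₁ - r₃) / 2 + 1)) (t ^ 2) n ≠ 0) ∧
    F t 2 N r₁ r₂ i r₃ r₄ j =
      (-1 : ℝ) ^ (rho r₁ r₂ r₃ r₄) * Kfac t 2 N r₁ r₂ i r₃ r₄ j *
        ∑ n ∈ Finset.range ((mMax r₁ r₂ r₃ r₄ i j).toNat + 1),
          (t ^ 2) ^ n *
            (qpoch ((t ^ 2) ^ ((i - r₁ - r₂) / 2 - (N - 2))) (t ^ 2) n *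
              qpoch ((t ^ 2) ^ ((i - r₃ - r₄) / 2)) (t ^ 2) n *
              qpoch ((t ^ 2) ^ ((j - r₁ - r₄) / 2)) (t ^ 2) n *
              qpoch ((t ^ 2) ^ ((j - r₂ - r₃) / 2)) (t ^ 2) n) /
            (qpoch (t ^ 2) (t ^ 2) n *
              qpoch ((t ^ 2) ^ (-(rho r₁ r₂ r₃ r₄) - (N - 1))) (t ^ 2) n *
              qpoch ((t ^ 2) ^ ((i + j - r₂ - r₄) / 2 + 1)) (t ^ 2) n *
              qpoch ((t ^ 2) ^ ((i + j - r₁ - r₃) / 2 + 1)) (t ^ 2) n) := by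
  obtain ⟨hr1, hr2, hr3, hr4, hi0, hj0, hN, hdv1, hdv2, hdv3, hdv4, hmi, hiM, hmj, hjM⟩ := hadm
  clear hmi hmj
  have hiM1 : i ≤ r₁ + r₂ := le_trans hiM (min_le_left _ _)
  have hiM2 : i ≤ r₃ + r₄ := le_trans hiM (min_le_right _ _)
  have hjM1 : j ≤ r₂ + r₃ := le_trans hjM (min_le_left _ _)
  have hjM2 : j ≤ r₁ + r₄ := le_trans hjM (min_le_right _ _)
  clear hiM hjM
  have hrho : 2 * rho r₁ r₂ r₃ r₄ = r₁ + r₂ + r₃ + r₄ := by unfold rho; omega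
  have hB1 : 0 ≤ mMax r₁ r₂ r₃ r₄ i j := by unfold mMax; omega
  have hB2 : 2 * mMax r₁ r₂ r₃ r₄ i j ≤ r₁ + r₂ - i := by unfold mMax; omega
  have hB3 : 2 * mMax r₁ r₂ r₃ r₄ i j ≤ r₃ + r₄ - i := by unfold mMax; omega
  have hB4 : 2 * mMax r₁ r₂ r₃ r₄ i j ≤ r₁ + r₄ - j := by unfold mMax; omega
  have hB5 : 2 * mMax r₁ r₂ r₃ r₄ i j ≤ r₂ + r₃ - j := by unfold mMax; omega
  refine ⟨by unfold rho; omega, fun n hn => ⟨?_, ?_, ?_, ?_⟩, ?_⟩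
  · have h := qpoch_ne ht ht1 1 n (by intro s _; omega)
    rwa [zpow_one] at h
  · exact qpoch_ne ht ht1 _ n (by intro s hs; omega)
  · exact qpoch_ne ht ht1 _ n (by intro s hs; omega)
  · exact qpoch_ne ht ht1 _ n (by intro s hs; omega)
  · unfold F Kfac
    rw [show mMin r₁ r₂ r₃ r₄ i j = 0 from by unfold mMin; omega]
    rw [show Finset.Icc (0 : ℤ) (mMax r₁ r₂ r₃ r₄ i j) =
        Finset.map ⟨fun k : ℕ => (k : ℤ), Nat.cast_injective⟩
          (Finset.range ((mMax r₁ r₂ r₃ r₄ i j).toNat + 1)) from by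
      ext x
      simp only [Finset.mem_Icc, Finset.mem_map, Finset.mem_range, Function.Embedding.coeFn_mk]
      constructor
      · rintro ⟨hx0, hx1⟩; exact ⟨x.toNat, by omega, by omega⟩
      · rintro ⟨a, ha, rfl⟩; omega]
    rw [Finset.sum_map]
    simp only [Function.Embedding.coeFn_mk]
    rw [Finset.mul_sum, Finset.mul_sum]
    refine Finset.sum_congr rfl fun k hk => ?_
    have hkM : (k : ℤ) ≤ mMax r₁ r₂ r₃ r₄ i j := by
      have := Finset.mem_range.mp hk; omega
    simp only [show (if (2 : ℕ) = 1 then (1 : ℤ) else 0) = 0 from by norm_num, reduceIte,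
      mul_one, mul_zero, add_zero]
    rw [show ((i - r₁ - r₂) / 2 - (N - 2) : ℤ) = -((r₁ + r₂ - i) / 2 + (N - 2)) from by omega,
      show ((i - r₃ - r₄) / 2 : ℤ) = -((r₃ + r₄ - i) / 2) from by omega,
      show ((j - r₁ - r₄) / 2 : ℤ) = -((r₁ + r₄ - j) / 2) from by omega,
      show ((j - r₂ - r₃) / 2 : ℤ) = -((r₂ + r₃ - j) / 2) from by omega,
      show (-(rho r₁ r₂ r₃ r₄) - (N - 1) : ℤ) = -(rho r₁ r₂ r₃ r₄ + N - 1) from by ring]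
    have hA := masterA t ht ht1 ((r₁ + r₂ - i) / 2 + (N - 2)) ((r₃ + r₄ - i) / 2)
      ((r₁ + r₄ - j) / 2) ((r₂ + r₃ - j) / 2) ((i + j - r₂ - r₄) / 2) ((i + j - r₁ - r₃) / 2)
      (rho r₁ r₂ r₃ r₄ + N - 1) (by omega) (by omega) (by unfold rho; omega) k
      (by omega) (by omega) (by omega) (by omega)
    rw [zpow_one] at hA
    rw [show (-1 : ℝ) ^ (rho r₁ r₂ r₃ r₄ - (k : ℤ))
        = (-1 : ℝ) ^ (rho r₁ r₂ r₃ r₄) * (-1 : ℝ) ^ (k : ℕ) from by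
      rw [zpow_sub₀ (by norm_num : (-1 : ℝ) ≠ 0), zpow_natCast, div_eq_mul_inv]
      congr 1
      rw [← inv_pow]; norm_num]
    rcases neg_one_pow_eq_or ℝ k with h | h <;> rw [h] at hA ⊢
    · linear_combination ((-1 : ℝ) ^ (rho r₁ r₂ r₃ r₄) * Kprime t N r₁ r₂ r₃ r₄ i j) * hA
    · linear_combination (-((-1 : ℝ) ^ (rho r₁ r₂ r₃ r₄) * Kprime t N r₁ r₂ r₃ r₄ i j)) * hA
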